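/- Let n ≥ 1, let ρ : Fin n → ℝ satisfy |ρ i| < 1 for every i, let α : Fin n → ℝ and β ∈ ℝ. Then the (absolutely convergent) multiple series ∑_{k : Fin n → ℕ} (∏_{i} (ρ i)^{k i}) · sin(β + ∑_{i} (k i)·(α i)) equals [∑_{M ⊆ Fin n} (−1)^{|M|} (∏_{i ∈ M} ρ i) · sin(β − ∑_{i ∈ M} α i)] / ∏_{i} (1 + (ρ i)² − 2 (ρ i) cos(α i)). -/

import Mathlib

lemma pi_tsum_aux (n : ℕ) (f : Fin n → ℕ → ℂ) (hf : ∀ i, Summable fun k => ‖f i k‖) :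
    Summable (fun k : Fin n → ℕ => ‖∏ i, f i (k i)‖) ∧
    ∑' k : Fin n → ℕ, ∏ i, f i (k i) = ∏ i, ∑' k, f i k := by
  induction n with
  | zero =>
    constructor
    · exact .of_finite
    · rw [tsum_eq_single (default : Fin 0 → ℕ)
        (fun b hb => absurd (Subsingleton.elim b default) hb)]
      simp
  | succ n ih =>
    obtain ⟨ihs, ihe⟩ := ih (fun i => f i.succ) (fun i => hf i.succ)
    have ihs' : Summable (fun k : Fin n → ℕ => ‖∏ i, f i.succ (k i)‖) := ihs
    have ihe' : ∑' k : Fin n → ℕ, ∏ i, f i.succ (k i) = ∏ i : Fin n, ∑' k, f i.succ k := ihe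
    have key : ∀ k : Fin (n+1) → ℕ, ∏ i, f i (k i) =
        f 0 (k 0) * ∏ i : Fin n, f i.succ (k i.succ) := fun k => Fin.prod_univ_succ _
    have hs2 : Summable (fun p : ℕ × (Fin n → ℕ) => ‖f 0 p.1 * ∏ i, f i.succ (p.2 i)‖) := by
      have := Summable.mul_norm (f := f 0) (g := fun v : Fin n → ℕ => ∏ i, f i.succ (v i))
        (hf 0) ?_
      · exact this
      · exact ihs'
    have step : ∀ p : ℕ × (Fin n → ℕ),
        (∏ i, f i (((Fin.consEquiv (fun _ : Fin (n+1) => ℕ)) p) i)) =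
        f 0 p.1 * ∏ i, f i.succ (p.2 i) := by
      intro p
      rw [key]
      simp [Fin.consEquiv]
    have hse : Summable (fun k : Fin (n+1) → ℕ => ‖∏ i, f i (k i)‖) := by
      rw [← (Fin.consEquiv (fun _ : Fin (n+1) => ℕ)).summable_iff]
      apply hs2.congr
      intro p
      simp only [Function.comp_apply, step p]
    refine ⟨hse, ?_⟩
    rw [← (Fin.consEquiv (fun _ : Fin (n+1) => ℕ)).tsum_eq]
    have mul_eq : (∑' k, f 0 k) * (∑' v : Fin n → ℕ, ∏ i, f i.succ (v i)) =
        ∑' p : ℕ × (Fin n → ℕ), f 0 p.1 * ∏ i, f i.succ (p.2 i) := by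
      have := tsum_mul_tsum_of_summable_norm (f := f 0)
        (g := fun v : Fin n → ℕ => ∏ i, f i.succ (v i)) ?_ ?_
      · exact this
      · exact hf 0
      · exact ihs'
    rw [tsum_congr step, ← mul_eq, Fin.prod_univ_succ, ihe']

lemma im_aux (r θ : ℝ) : ((r:ℂ) * Complex.exp (θ * Complex.I)).im = r * Real.sin θ := by
  simp [Complex.exp_mul_I, Complex.add_im, Complex.mul_im, Complex.sin_ofReal_re]

theorem tsum_sin_eq (n : ℕ) (hn : 1 ≤ n) (ρ α : Fin n → ℝ) (hρ : ∀ i, |ρ i| < 1) (β : ℝ) :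
    ∑' k : Fin n → ℕ, (∏ i, ρ i ^ k i) * Real.sin (β + ∑ i, (k i : ℝ) * α i) =
      (∑ M : Finset (Fin n), (-1 : ℝ) ^ M.card * (∏ i ∈ M, ρ i) *
        Real.sin (β - ∑ i ∈ M, α i)) /
      ∏ i, (1 + ρ i ^ 2 - 2 * ρ i * Real.cos (α i)) := by
  classical
  set z : Fin n → ℂ := fun i => (ρ i : ℂ) * Complex.exp ((α i : ℝ) * Complex.I) with hz_def
  have hz : ∀ i, ‖z i‖ < 1 := by
    intro i
    have : ‖z i‖ = |ρ i| := by
      simp [hz_def, Complex.norm_exp]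
    rw [this]; exact hρ i
  have hf : ∀ i, Summable fun k => ‖z i ^ k‖ := by
    intro i
    simp only [norm_pow]
    exact summable_geometric_of_lt_one (norm_nonneg _) (hz i)
  obtain ⟨hsumnorm, heq⟩ := pi_tsum_aux n (fun i k => z i ^ k) hf
  have hsum : Summable (fun k : Fin n → ℕ => ∏ i, z i ^ k i) := by
    exact Summable.of_norm hsumnorm
  -- geometric series
  have hgeom : ∀ i : Fin n, ∑' k : ℕ, z i ^ k = (1 - z i)⁻¹ :=
    fun i => tsum_geometric_of_norm_lt_one (hz i)
  -- pointwise identity for terms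
  have hpow : ∀ (i : Fin n) (k : ℕ), z i ^ k
      = ((ρ i ^ k : ℝ) : ℂ) * Complex.exp (((k : ℝ) * α i : ℝ) * Complex.I) := by
    intro i k
    rw [hz_def, mul_pow, ← Complex.exp_nat_mul]
    push_cast
    ring_nf
  have hterm : ∀ k : Fin n → ℕ,
      ((∏ i, z i ^ k i) * Complex.exp ((β : ℝ) * Complex.I)).im
        = (∏ i, ρ i ^ k i) * Real.sin (β + ∑ i, (k i : ℝ) * α i) := by
    intro k
    have : (∏ i, z i ^ k i)
        = ((∏ i, ρ i ^ k i : ℝ) : ℂ) * Complex.exp (((∑ i, (k i : ℝ) * α i) : ℝ) * Complex.I) := by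
      calc ∏ i, z i ^ k i
          = ∏ i, (((ρ i ^ k i : ℝ) : ℂ) * Complex.exp (((k i : ℝ) * α i : ℝ) * Complex.I)) := by
            exact Finset.prod_congr rfl (fun i _ => hpow i (k i))
        _ = (∏ i, ((ρ i ^ k i : ℝ) : ℂ)) * ∏ i, Complex.exp (((k i : ℝ) * α i : ℝ) * Complex.I) :=
            Finset.prod_mul_distrib
        _ = ((∏ i, ρ i ^ k i : ℝ) : ℂ) * Complex.exp (((∑ i, (k i : ℝ) * α i) : ℝ) * Complex.I) := by
            rw [← Complex.exp_sum]
            push_cast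
            rw [Finset.sum_mul]
    rw [this, mul_assoc, ← Complex.exp_add]
    have : ((∑ i, (k i : ℝ) * α i : ℝ) : ℂ) * Complex.I + (β : ℝ) * Complex.I
        = ((β + ∑ i, (k i : ℝ) * α i : ℝ) : ℂ) * Complex.I := by push_cast; ring
    rw [this, im_aux]
  -- move im inside tsum
  have hFsum : Summable (fun k : Fin n → ℕ => (∏ i, z i ^ k i) * Complex.exp ((β:ℝ) * Complex.I)) :=
    hsum.mul_right _
  have hLHS : ∑' k : Fin n → ℕ, (∏ i, ρ i ^ k i) * Real.sin (β + ∑ i, (k i : ℝ) * α i)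
      = ((∑' k : Fin n → ℕ, ∏ i, z i ^ k i) * Complex.exp ((β:ℝ) * Complex.I)).im := by
    calc ∑' k : Fin n → ℕ, (∏ i, ρ i ^ k i) * Real.sin (β + ∑ i, (k i : ℝ) * α i)
        = ∑' k : Fin n → ℕ, Complex.imCLM ((∏ i, z i ^ k i) * Complex.exp ((β:ℝ) * Complex.I)) := by
          exact tsum_congr fun k => (hterm k).symm
      _ = Complex.imCLM (∑' k : Fin n → ℕ, (∏ i, z i ^ k i) * Complex.exp ((β:ℝ) * Complex.I)) :=
          (Complex.imCLM.map_tsum hFsum).symm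
      _ = ((∑' k : Fin n → ℕ, ∏ i, z i ^ k i) * Complex.exp ((β:ℝ) * Complex.I)).im := by
          rw [tsum_mul_right]
          rfl
  rw [hLHS, heq]
  have hgeomprod : ∏ i, ∑' k : ℕ, z i ^ k = ∏ i, (1 - z i)⁻¹ :=
    Finset.prod_congr rfl fun i _ => hgeom i
  rw [hgeomprod]
  -- positivity of denominators
  set C : Fin n → ℝ := fun i => 1 + ρ i ^ 2 - 2 * ρ i * Real.cos (α i) with hC_def
  have hCpos : ∀ i, 0 < C i := by
    intro i
    have h1 : ρ i * Real.cos (α i) ≤ |ρ i| := by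
      calc ρ i * Real.cos (α i) ≤ |ρ i * Real.cos (α i)| := le_abs_self _
        _ = |ρ i| * |Real.cos (α i)| := abs_mul _ _
        _ ≤ |ρ i| * 1 := by
            exact mul_le_mul_of_nonneg_left (Real.abs_cos_le_one _) (abs_nonneg _)
        _ = |ρ i| := mul_one _
    have h2 := hρ i
    have h3 := sq_abs (ρ i)
    show 0 < 1 + ρ i ^ 2 - 2 * ρ i * Real.cos (α i)
    nlinarith [sq_nonneg (1 - |ρ i|)]
  have hCne : ∀ i, (C i : ℂ) ≠ 0 := fun i => by
    exact_mod_cast Complex.ofReal_ne_zero.mpr (hCpos i).ne'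
  -- conjugate
  have hconj : ∀ i, (starRingEnd ℂ) (z i) = (ρ i : ℂ) * Complex.exp ((-(α i) : ℝ) * Complex.I) := by
    intro i
    rw [hz_def, map_mul, ← Complex.exp_conj]
    simp
  have hzz : ∀ i, (1 - z i) * (1 - (starRingEnd ℂ) (z i)) = (C i : ℂ) := by
    intro i
    rw [hconj i, hz_def]
    have h2 : Complex.exp ((α i : ℝ) * Complex.I) + Complex.exp ((-(α i) : ℝ) * Complex.I)
        = 2 * (Real.cos (α i) : ℂ) := by
      rw [Complex.ofReal_cos, Complex.cos]
      push_cast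
      ring
    have h3 : Complex.exp ((α i : ℝ) * Complex.I) * Complex.exp ((-(α i) : ℝ) * Complex.I) = 1 := by
      rw [← Complex.exp_add]
      have : ((α i : ℝ) : ℂ) * Complex.I + ((-(α i) : ℝ) : ℂ) * Complex.I = 0 := by
        push_cast; ring
      rw [this, Complex.exp_zero]
    show _ = ((1 + ρ i ^ 2 - 2 * ρ i * Real.cos (α i) : ℝ) : ℂ)
    push_cast at h2 h3 ⊢
    linear_combination ((ρ i : ℂ))^2 * h3 - (ρ i : ℂ) * h2
  have hinv : ∀ i, (1 - z i)⁻¹ = (1 - (starRingEnd ℂ) (z i)) / (C i : ℂ) := by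
    intro i
    have hne : (1 - z i) ≠ 0 := by
      intro h
      have : ‖z i‖ = 1 := by
        have : z i = 1 := by linear_combination -h
        rw [this]; simp
      linarith [hz i]
    rw [eq_div_iff (hCne i), ← hzz i, inv_mul_eq_div, div_eq_iff hne]
    ring
  rw [Finset.prod_congr rfl fun i _ => hinv i, Finset.prod_div_distrib]
  -- expand the numerator product
  have hexp : ∏ i, (1 - (starRingEnd ℂ) (z i))
      = ∑ M : Finset (Fin n), ((-1 : ℝ) ^ M.card * ∏ i ∈ M, ρ i : ℝ)
          * Complex.exp (((- ∑ i ∈ M, α i : ℝ)) * Complex.I) := by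
    have := Finset.prod_add (fun i => -(starRingEnd ℂ) (z i)) (fun _ => (1:ℂ)) Finset.univ
    have h0 : ∏ i, (1 - (starRingEnd ℂ) (z i)) = ∏ i, (-(starRingEnd ℂ) (z i) + 1) := by
      exact Finset.prod_congr rfl fun i _ => by ring
    rw [h0, this, Finset.powerset_univ]
    refine Finset.sum_congr rfl fun M _ => ?_
    rw [Finset.prod_const_one, mul_one]
    calc ∏ i ∈ M, -(starRingEnd ℂ) (z i)
        = ∏ i ∈ M, (-1 : ℂ) * ((ρ i : ℂ) * Complex.exp ((-(α i) : ℝ) * Complex.I)) := by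
          exact Finset.prod_congr rfl fun i _ => by rw [hconj i]; ring
      _ = ((-1:ℂ)) ^ M.card * ((∏ i ∈ M, (ρ i:ℂ)) * ∏ i ∈ M, Complex.exp ((-(α i) : ℝ) * Complex.I)) := by
          rw [Finset.prod_mul_distrib, Finset.prod_const, Finset.prod_mul_distrib]
      _ = ((-1 : ℝ) ^ M.card * ∏ i ∈ M, ρ i : ℝ) * Complex.exp (((- ∑ i ∈ M, α i : ℝ)) * Complex.I) := by
          rw [← Complex.exp_sum]
          push_cast
          rw [← Finset.sum_mul, Finset.sum_neg_distrib]
          ring_nf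
  rw [hexp]
  -- denominator is real product
  have hCprod : ∏ i, (C i : ℂ) = ((∏ i, C i : ℝ) : ℂ) := by push_cast; rfl
  rw [hCprod, div_mul_eq_mul_div, Complex.div_ofReal_im]
  congr 1
  rw [Finset.sum_mul, Complex.im_sum]
  refine Finset.sum_congr rfl fun M _ => ?_
  rw [mul_assoc, ← Complex.exp_add]
  have harg : ((- ∑ i ∈ M, α i : ℝ) : ℂ) * Complex.I + ((β : ℝ) : ℂ) * Complex.I
      = ((β - ∑ i ∈ M, α i : ℝ) : ℂ) * Complex.I := by push_cast; ring
  rw [harg, im_aux]
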